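/- For all reals c, γ with 0 < c < 1/3 and 0 < γ < 1/3 there exists n₀ ∈ ℕ with the following property: let G be a graph on n ≥ n₀ vertices, let s = ⌊c·log₂ n⌋, and suppose G contains K₃(s) with classes A₁, A₂, A₃; write K for A₁ ∪ A₂ ∪ A₃. If B ⊆ V(G) \ K satisfies |B| ≥ γn and e(B, K) ≥ (2/3 + 2γ)|B||K|, then there exist sets A'₁ ⊆ A₁, A'₂ ⊆ A₂, A'₃ ⊆ A₃ and B' ⊆ B, each of size ⌊γs⌋, such that every two vertices lying in different ones of these four sets are adjacent in G. -/

import Mathlib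

open Finset

lemma iterstep {V : Type} [DecidableEq V] (G : SimpleGraph V) [DecidableRel G.Adj]
    (X A : Finset V) (t d : ℕ) (htA : t ≤ A.card)
    (hd : ∀ b ∈ X, d ≤ (A.filter (G.Adj b)).card) :
    ∃ S ⊆ A, S.card = t ∧
      X.card * (d + 1 - t) ^ t ≤
        (X.filter fun b => ∀ a ∈ S, G.Adj b a).card * A.card ^ t := by
  classical
  set 𝒮 := A.powersetCard t with h𝒮
  have h𝒮ne : 𝒮.Nonempty := by
    rw [h𝒮, Finset.powersetCard_nonempty]; exact htA
  have key : X.card * Nat.choose d t ≤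
      ∑ S ∈ 𝒮, (X.filter fun b => ∀ a ∈ S, G.Adj b a).card := by
    have swap : ∑ S ∈ 𝒮, (X.filter fun b => ∀ a ∈ S, G.Adj b a).card
        = ∑ b ∈ X, (𝒮.filter fun S => ∀ a ∈ S, G.Adj b a).card := by
      simp only [Finset.card_filter]
      rw [Finset.sum_comm]
    rw [swap]
    have hb : ∀ b ∈ X, Nat.choose d t ≤ (𝒮.filter fun S => ∀ a ∈ S, G.Adj b a).card := by
      intro b hb
      have heq : (𝒮.filter fun S => ∀ a ∈ S, G.Adj b a)
          = (A.filter (G.Adj b)).powersetCard t := by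
        ext S
        simp only [Finset.mem_filter, h𝒮, Finset.mem_powersetCard, Finset.subset_iff,
          Finset.mem_filter]
        constructor
        · rintro ⟨⟨hSA, hcard⟩, hadj⟩
          exact ⟨fun x hx => ⟨hSA hx, hadj x hx⟩, hcard⟩
        · rintro ⟨hS, hcard⟩
          exact ⟨⟨fun x hx => (hS hx).1, hcard⟩, fun a ha => (hS ha).2⟩
      rw [heq, Finset.card_powersetCard]
      exact Nat.choose_le_choose t (hd b hb)
    calc X.card * Nat.choose d t = ∑ _b ∈ X, Nat.choose d t := by
          rw [Finset.sum_const, smul_eq_mul]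
      _ ≤ _ := Finset.sum_le_sum hb
  have pig : ∃ S ∈ 𝒮, X.card * Nat.choose d t ≤
      Nat.choose A.card t * (X.filter fun b => ∀ a ∈ S, G.Adj b a).card := by
    apply exists_le_of_sum_le h𝒮ne
    calc ∑ _S ∈ 𝒮, X.card * Nat.choose d t = 𝒮.card * (X.card * Nat.choose d t) := by
          rw [Finset.sum_const, smul_eq_mul]
      _ = Nat.choose A.card t * (X.card * Nat.choose d t) := by
          rw [h𝒮, Finset.card_powersetCard]
      _ ≤ Nat.choose A.card t * ∑ S ∈ 𝒮, (X.filter fun b => ∀ a ∈ S, G.Adj b a).card :=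
          Nat.mul_le_mul_left _ key
      _ = ∑ S ∈ 𝒮, Nat.choose A.card t * (X.filter fun b => ∀ a ∈ S, G.Adj b a).card := by
          rw [Finset.mul_sum]
  obtain ⟨S, hS𝒮, hSle⟩ := pig
  rw [h𝒮, Finset.mem_powersetCard] at hS𝒮
  refine ⟨S, hS𝒮.1, hS𝒮.2, ?_⟩
  set Y := (X.filter fun b => ∀ a ∈ S, G.Adj b a).card
  -- X.card * (d+1-t)^t ≤ X.card * descFactorial d t = X.card * (t! * choose d t)
  -- ≤ t! * (choose A.card t * Y) = Y * descFactorial A.card t ≤ Y * A.card ^ t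
  calc X.card * (d + 1 - t) ^ t ≤ X.card * d.descFactorial t :=
        Nat.mul_le_mul_left _ (Nat.pow_sub_le_descFactorial d t)
    _ = X.card * (t.factorial * Nat.choose d t) := by rw [Nat.descFactorial_eq_factorial_mul_choose]
    _ = t.factorial * (X.card * Nat.choose d t) := by ring
    _ ≤ t.factorial * (Nat.choose A.card t * Y) := Nat.mul_le_mul_left _ hSle
    _ = Y * (t.factorial * Nat.choose A.card t) := by ring
    _ = Y * A.card.descFactorial t := by rw [Nat.descFactorial_eq_factorial_mul_choose]
    _ ≤ Y * A.card ^ t := Nat.mul_le_mul_left _ (Nat.descFactorial_le_pow _ _)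

lemma triple {V : Type} [DecidableEq V] (G : SimpleGraph V) [DecidableRel G.Adj]
    (A : Fin 3 → Finset V) (X : Finset V) (s t d : ℕ)
    (hA : ∀ i, (A i).card = s) (hts : t ≤ s)
    (hd : ∀ i, ∀ b ∈ X, d ≤ ((A i).filter (G.Adj b)).card) :
    ∃ S : Fin 3 → Finset V, (∀ i, S i ⊆ A i) ∧ (∀ i, (S i).card = t) ∧
      ∃ Y ⊆ X, X.card * ((d + 1 - t) ^ t) ^ 3 ≤ Y.card * (s ^ t) ^ 3 ∧
        ∀ b ∈ Y, ∀ i, ∀ a ∈ S i, G.Adj b a := by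
  classical
  obtain ⟨S0, hS0A, hS0c, h0⟩ := iterstep G X (A 0) t d (by rw [hA]; exact hts) (hd 0)
  set X1 := X.filter fun b => ∀ a ∈ S0, G.Adj b a with hX1
  have hX1X : X1 ⊆ X := Finset.filter_subset _ _
  obtain ⟨S1, hS1A, hS1c, h1⟩ := iterstep G X1 (A 1) t d (by rw [hA]; exact hts)
    (fun b hb => hd 1 b (hX1X hb))
  set X2 := X1.filter fun b => ∀ a ∈ S1, G.Adj b a with hX2
  have hX2X : X2 ⊆ X1 := Finset.filter_subset _ _
  obtain ⟨S2, hS2A, hS2c, h2⟩ := iterstep G X2 (A 2) t d (by rw [hA]; exact hts)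
    (fun b hb => hd 2 b (hX1X (hX2X hb)))
  set X3 := X2.filter fun b => ∀ a ∈ S2, G.Adj b a with hX3
  have hX3X : X3 ⊆ X2 := Finset.filter_subset _ _
  refine ⟨![S0, S1, S2], ?_, ?_, X3, fun b hb => hX1X (hX2X (hX3X hb)), ?_, ?_⟩
  · intro i; fin_cases i <;> simpa
  · intro i; fin_cases i <;> simpa
  · rw [hA 0] at h0; rw [hA 1] at h1; rw [hA 2] at h2
    set p := s ^ t with hp
    set q := (d + 1 - t) ^ t with hq
    calc X.card * q ^ 3 = (X.card * q) * q * q := by ring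
      _ ≤ (X1.card * p) * q * q := by
          exact Nat.mul_le_mul_right _ (Nat.mul_le_mul_right _ h0)
      _ = (X1.card * q) * p * q := by ring
      _ ≤ (X2.card * p) * p * q := by
          exact Nat.mul_le_mul_right _ (Nat.mul_le_mul_right _ h1)
      _ = (X2.card * q) * p * p := by ring
      _ ≤ (X3.card * p) * p * p := by
          exact Nat.mul_le_mul_right _ (Nat.mul_le_mul_right _ h2)
      _ = X3.card * p ^ 3 := by ring
  · intro b hb i
    have hb2 := hX3X hb
    have hb1 := hX2X hb2
    rw [hX3, Finset.mem_filter] at hb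
    rw [hX2, Finset.mem_filter] at hb2
    rw [hX1, Finset.mem_filter] at hb1
    fin_cases i
    · simpa using hb1.2
    · simpa using hb2.2
    · simpa using hb.2

lemma asym (c γ : ℝ) (hc0 : 0 < c) (hc1 : c < 1/3) (hγ0 : 0 < γ) (hγ1 : γ < 1/3) :
    ∃ n₀ : ℕ, 1 ≤ n₀ ∧ ∀ n : ℕ, n₀ ≤ n → ∀ t : ℕ,
      (t : ℝ) ≤ γ * (c * Real.logb 2 n) →
      (t : ℝ) ≤ γ ^ 2 * n * (2 * γ) ^ (3 * t) := by
  have hlog2 : (0:ℝ) < Real.log 2 := Real.log_pos one_lt_two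
  have hlog2' : 1/2 < Real.log 2 := by
    have := Real.log_two_gt_d9; linarith
  set β := 3 * c / (2 * Real.log 2) with hβ
  have hβpos : 0 < β := by positivity
  have hβ1 : β < 1 := by
    rw [hβ, div_lt_one (by positivity)]; nlinarith
  have hδ : (0:ℝ) < 1 - β := by linarith
  have hε : (0:ℝ) < γ * Real.log 2 / c := by positivity
  have hev := (isLittleO_log_rpow_atTop hδ).def hε
  rw [Filter.eventually_atTop] at hev
  obtain ⟨a, ha⟩ := hev
  refine ⟨max 1 ⌈a⌉₊, le_max_left _ _, fun n hn t ht => ?_⟩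
  have hn1 : 1 ≤ n := le_trans (le_max_left _ _) hn
  have hnR : (1:ℝ) ≤ (n:ℝ) := by exact_mod_cast hn1
  have hnpos : (0:ℝ) < n := by linarith
  have hna : a ≤ (n:ℝ) := by
    have : (⌈a⌉₊ : ℝ) ≤ n := by exact_mod_cast le_trans (le_max_right 1 ⌈a⌉₊) hn
    exact le_trans (Nat.le_ceil a) this
  have hlogn : 0 ≤ Real.log n := Real.log_nonneg hnR
  have hlittle := ha n hna
  rw [Real.norm_eq_abs, Real.norm_eq_abs, abs_of_nonneg hlogn,
    abs_of_nonneg (Real.rpow_nonneg (le_of_lt hnpos) _)] at hlittle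
  -- T := γ * c * logb 2 n
  have hlogb : Real.logb 2 (n:ℝ) = Real.log n / Real.log 2 := Real.log_div_log.symm
  set T := γ * (c * Real.logb 2 (n:ℝ)) with hT
  have hTnonneg : 0 ≤ T := by
    rw [hT, hlogb]; positivity
  have h2γ0 : (0:ℝ) < 2 * γ := by linarith
  have h2γ1 : 2 * γ ≤ 1 := by linarith
  -- key log bound : γ * (-log (2γ)) ≤ 1/2 - γ
  have hkey : γ * (-Real.log (2*γ)) ≤ 1/2 - γ := by
    have h1 : Real.log ((2*γ)⁻¹) ≤ (2*γ)⁻¹ - 1 :=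
      Real.log_le_sub_one_of_pos (by positivity)
    rw [Real.log_inv] at h1
    have h2 : γ * (-Real.log (2*γ)) ≤ γ * ((2*γ)⁻¹ - 1) :=
      mul_le_mul_of_nonneg_left h1 (le_of_lt hγ0)
    have h3 : γ * ((2*γ)⁻¹ - 1) = 1/2 - γ := by
      field_simp
    linarith [h2, h3.le]
  -- step: n ^ (-β) ≤ (2γ) ^ (3T)  (rpow)
  have step1 : (n:ℝ) ^ (-β) ≤ (2*γ) ^ (3*T) := by
    rw [Real.rpow_def_of_pos h2γ0, Real.rpow_def_of_pos hnpos]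
    apply Real.exp_le_exp.mpr
    rw [hT, hlogb]
    have : 3 * (γ * (c * (Real.log n / Real.log 2))) * (-Real.log (2*γ))
        ≤ β * Real.log n := by
      rw [hβ]
      rw [div_mul_eq_mul_div, le_div_iff₀ (by positivity)]
      have e1 : 3 * (γ * (c * (Real.log n / Real.log 2))) * (-Real.log (2*γ)) * (2*Real.log 2)
          = 6 * c * Real.log n * (γ * (-Real.log (2*γ))) := by
        field_simp; ring
      rw [e1]
      have : 6 * c * Real.log n * (γ * (-Real.log (2*γ)))
          ≤ 6 * c * Real.log n * (1/2 - γ) := by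
        apply mul_le_mul_of_nonneg_left hkey (by positivity)
      nlinarith [mul_nonneg (mul_nonneg hc0.le hγ0.le) hlogn]
    nlinarith
  -- step: (2γ)^(3T) ≤ (2γ)^(3t : ℝ)
  have step2 : (2*γ) ^ (3*T) ≤ (2*γ) ^ ((3*t : ℕ) : ℝ) := by
    apply Real.rpow_le_rpow_of_exponent_ge h2γ0 h2γ1
    push_cast
    linarith
  have step2' : (2*γ) ^ ((3*t : ℕ) : ℝ) = (2*γ) ^ (3*t) := Real.rpow_natCast _ _
  -- step: T ≤ γ^2 * n ^ (1-β)
  have step3 : T ≤ γ^2 * (n:ℝ) ^ ((1:ℝ)-β) := by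
    rw [hT, hlogb]
    calc γ * (c * (Real.log n / Real.log 2))
        = (γ * c / Real.log 2) * Real.log n := by ring
      _ ≤ (γ * c / Real.log 2) * (γ * Real.log 2 / c * (n:ℝ) ^ ((1:ℝ)-β)) := by
          apply mul_le_mul_of_nonneg_left hlittle (by positivity)
      _ = γ^2 * (n:ℝ) ^ ((1:ℝ)-β) := by field_simp
  have split : γ^2 * (n:ℝ) ^ ((1:ℝ)-β) = γ^2 * n * (n:ℝ) ^ (-β) := by
    rw [show (1:ℝ) - β = 1 + (-β) by ring, Real.rpow_add hnpos, Real.rpow_one]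
    ring
  calc (t:ℝ) ≤ T := ht
    _ ≤ γ^2 * n * (n:ℝ) ^ (-β) := by rw [← split]; exact step3
    _ ≤ γ^2 * n * (2*γ) ^ (3*T) := by
        apply mul_le_mul_of_nonneg_left step1 (by positivity)
    _ ≤ γ^2 * n * (2*γ) ^ (3*t) := by
        rw [← step2']
        apply mul_le_mul_of_nonneg_left step2 (by positivity)

lemma core {V : Type} [DecidableEq V] (G : SimpleGraph V) [DecidableRel G.Adj]
    (γ : ℝ) (hγ0 : 0 < γ) (hγ1 : γ < 1/3) (A : Fin 3 → Finset V) (B : Finset V)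
    (s t n : ℕ) (hs1 : 1 ≤ s)
    (hA : ∀ i, (A i).card = s)
    (hdisj : ∀ i j, i ≠ j → Disjoint (A i) (A j))
    (hBcard : γ * n ≤ B.card)
    (hE : (2/3 + 2*γ) * B.card * ((A 0 ∪ A 1 ∪ A 2)).card ≤
      (((B ×ˢ (A 0 ∪ A 1 ∪ A 2)).filter fun p => G.Adj p.1 p.2).card : ℝ))
    (htR : (t:ℝ) ≤ γ * s) (hts : t ≤ s)
    (hfin : (t:ℝ) ≤ γ^2 * n * (2*γ)^(3*t)) :
    ∃ (S : Fin 3 → Finset V) (B' : Finset V),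
      (∀ i, S i ⊆ A i) ∧ B' ⊆ B ∧ (∀ i, (S i).card = t) ∧ B'.card = t ∧
      (∀ b ∈ B', ∀ i, ∀ a ∈ S i, G.Adj b a) := by
  classical
  have hsR : (1:ℝ) ≤ (s:ℝ) := by exact_mod_cast hs1
  set K := A 0 ∪ A 1 ∪ A 2 with hK_def
  have hd01 := hdisj 0 1 (by decide)
  have hd02 := hdisj 0 2 (by decide)
  have hd12 := hdisj 1 2 (by decide)
  have hKcard : K.card = 3 * s := by
    rw [hK_def, Finset.card_union_of_disjoint, Finset.card_union_of_disjoint hd01]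
    · rw [hA 0, hA 1, hA 2]; ring
    · rw [Finset.disjoint_union_left]; exact ⟨hd02, hd12⟩
  -- edge count as a sum of degrees
  have hEdeg : ((B ×ˢ K).filter fun p => G.Adj p.1 p.2).card
      = ∑ b ∈ B, (K.filter (G.Adj b)).card := by
    simp only [Finset.card_filter]
    rw [Finset.sum_product]
  -- the set of high-degree vertices
  set X := B.filter (fun b => (2+3*γ)*s ≤ ((K.filter (G.Adj b)).card : ℝ)) with hX_def
  have hXB : X ⊆ B := Finset.filter_subset _ _
  -- claim 1 : γ^2 n ≤ |X|
  have claim1 : (γ^2 * n : ℝ) ≤ X.card := by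
    have hsplitsum := Finset.sum_filter_add_sum_filter_not B
      (fun b => (2+3*γ)*s ≤ ((K.filter (G.Adj b)).card : ℝ))
      (fun b => ((K.filter (G.Adj b)).card : ℝ))
    have h1 : ∑ b ∈ X, ((K.filter (G.Adj b)).card : ℝ) ≤ X.card * (3*s) := by
      calc ∑ b ∈ X, ((K.filter (G.Adj b)).card : ℝ)
          ≤ ∑ _b ∈ X, ((3*s : ℕ) : ℝ) := by
            apply Finset.sum_le_sum
            intro b _
            exact_mod_cast (Finset.card_filter_le _ _).trans_eq hKcard
        _ = X.card * (3*s) := by rw [Finset.sum_const, nsmul_eq_mul]; push_cast; ring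
    have h2 : ∑ b ∈ B.filter (fun b => ¬ ((2+3*γ)*s ≤ ((K.filter (G.Adj b)).card : ℝ))),
        ((K.filter (G.Adj b)).card : ℝ)
        ≤ (B.card - X.card) * ((2+3*γ)*s) := by
      have hc : ((B.filter (fun b => ¬ ((2+3*γ)*s ≤ ((K.filter (G.Adj b)).card : ℝ)))).card : ℝ)
          = B.card - X.card := by
        have h := Finset.card_filter_add_card_filter_not (s := B)
          (p := fun b => (2+3*γ)*s ≤ ((K.filter (G.Adj b)).card : ℝ))
        rw [← hX_def] at h
        push_cast [← h]; ring
      calc ∑ b ∈ B.filter (fun b => ¬ ((2+3*γ)*s ≤ ((K.filter (G.Adj b)).card : ℝ))),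
          ((K.filter (G.Adj b)).card : ℝ)
          ≤ ∑ b ∈ B.filter (fun b => ¬ ((2+3*γ)*s ≤ ((K.filter (G.Adj b)).card : ℝ))), (2+3*γ)*s := by
            apply Finset.sum_le_sum
            intro b hb
            rw [Finset.mem_filter] at hb
            exact le_of_not_ge hb.2
        _ = _ := by rw [Finset.sum_const, nsmul_eq_mul, hc]
    have hEineq : (2/3 + 2*γ) * B.card * (3*s) ≤ X.card * (3*s) + (B.card - X.card) * ((2+3*γ)*s) := by
      have hEc : ((2/3 + 2*γ) * B.card * (3*s) : ℝ)
          ≤ ∑ b ∈ B, ((K.filter (G.Adj b)).card : ℝ) := by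
        have heq : (∑ b ∈ B, ((K.filter (G.Adj b)).card : ℝ))
            = (((B ×ˢ K).filter fun p => G.Adj p.1 p.2).card : ℝ) := by
          rw [hEdeg]; push_cast; ring
        rw [heq]
        calc (2/3 + 2*γ) * B.card * (3*s) = (2/3 + 2*γ) * B.card * ((3*s : ℕ) : ℝ) := by push_cast; ring
          _ = (2/3 + 2*γ) * B.card * (K.card : ℝ) := by rw [hKcard]
          _ ≤ _ := hE
      calc ((2/3 + 2*γ) * B.card * (3*s) : ℝ) ≤ ∑ b ∈ B, ((K.filter (G.Adj b)).card : ℝ) := hEc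
        _ = _ + _ := hsplitsum.symm
        _ ≤ X.card * (3*s) + (B.card - X.card) * ((2+3*γ)*s) := add_le_add h1 h2
    -- divide by s and conclude
    have hdiv : 3*γ*(B.card:ℝ) ≤ (1-3*γ) * X.card := by
      have hspos : (0:ℝ) < s := by linarith
      nlinarith [hEineq, hspos]
    have hXnn : (0:ℝ) ≤ X.card := Nat.cast_nonneg _
    nlinarith [hdiv, hBcard, mul_le_mul_of_nonneg_left hBcard hγ0.le]
  -- claim 2 : degrees into each class
  have claim2 : ∀ i, ∀ b ∈ X, (3*γ*(s:ℝ)) ≤ (((A i).filter (G.Adj b)).card : ℝ) := by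
    intro i b hb
    rw [hX_def, Finset.mem_filter] at hb
    have hdegK := hb.2
    have hsplit : (K.filter (G.Adj b)).card
        = ((A 0).filter (G.Adj b)).card + ((A 1).filter (G.Adj b)).card
          + ((A 2).filter (G.Adj b)).card := by
      rw [hK_def, Finset.filter_union, Finset.filter_union,
        Finset.card_union_of_disjoint, Finset.card_union_of_disjoint
          (Finset.disjoint_filter_filter hd01)]
      rw [Finset.disjoint_union_left]
      exact ⟨Finset.disjoint_filter_filter hd02, Finset.disjoint_filter_filter hd12⟩
    have hup : ∀ j, (((A j).filter (G.Adj b)).card : ℝ) ≤ s := by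
      intro j
      exact_mod_cast (Finset.card_filter_le _ _).trans_eq (hA j)
    have hsplitR : ((K.filter (G.Adj b)).card : ℝ)
        = (((A 0).filter (G.Adj b)).card : ℝ) + ((A 1).filter (G.Adj b)).card
          + ((A 2).filter (G.Adj b)).card := by exact_mod_cast congrArg Nat.cast hsplit
    fin_cases i
    · show (3*γ*(s:ℝ)) ≤ (((A 0).filter (G.Adj b)).card : ℝ)
      linarith [hup 1, hup 2, hdegK, hsplitR.le, hsplitR.ge]
    · show (3*γ*(s:ℝ)) ≤ (((A 1).filter (G.Adj b)).card : ℝ)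
      linarith [hup 0, hup 2, hdegK, hsplitR.le, hsplitR.ge]
    · show (3*γ*(s:ℝ)) ≤ (((A 2).filter (G.Adj b)).card : ℝ)
      linarith [hup 0, hup 1, hdegK, hsplitR.le, hsplitR.ge]
  set d := ⌈3*γ*(s:ℝ)⌉₊ with hd_def
  have hd : ∀ i, ∀ b ∈ X, d ≤ ((A i).filter (G.Adj b)).card := by
    intro i b hb
    rw [hd_def]
    exact Nat.ceil_le.mpr (claim2 i b hb)
  have hdR : 3*γ*(s:ℝ) ≤ d := Nat.le_ceil _
  have htd : t ≤ d := by
    have h : (t:ℝ) ≤ (d:ℝ) := by nlinarith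
    exact_mod_cast h
  have hq : (2*γ*(s:ℝ)) ≤ ((d + 1 - t : ℕ) : ℝ) := by
    have h1 : ((d + 1 - t : ℕ) : ℝ) = (d:ℝ) + 1 - t := by
      have h2 : t ≤ d + 1 := le_trans htd (Nat.le_succ d)
      push_cast [Nat.cast_sub h2]; ring
    rw [h1]; nlinarith
  obtain ⟨S, hSA, hSc, Y, hYX, hcount, hadjY⟩ := triple G A X s t d hA hts hd
  -- t ≤ |Y|
  have hYt : t ≤ Y.card := by
    have hcountR : (X.card : ℝ) * (((d+1-t : ℕ):ℝ)^t)^3 ≤ (Y.card:ℝ) * ((s:ℝ)^t)^3 := by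
      exact_mod_cast hcount
    have hpow : ((s:ℝ)^t)^3 = (s:ℝ)^(3*t) := by rw [← pow_mul]; ring_nf
    have hpow2 : (((d+1-t : ℕ):ℝ)^t)^3 = ((d+1-t : ℕ):ℝ)^(3*t) := by rw [← pow_mul]; ring_nf
    rw [hpow, hpow2] at hcountR
    have hchain : (t:ℝ) * (s:ℝ)^(3*t) ≤ (Y.card:ℝ) * (s:ℝ)^(3*t) := by
      have e1 : (t:ℝ) * (s:ℝ)^(3*t) ≤ γ^2 * n * (2*γ)^(3*t) * (s:ℝ)^(3*t) :=
        mul_le_mul_of_nonneg_right hfin (by positivity)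
      have e2 : γ^2 * n * (2*γ)^(3*t) * (s:ℝ)^(3*t) = γ^2 * n * (2*γ*(s:ℝ))^(3*t) := by
        rw [mul_pow]; ring
      have e3 : γ^2 * n * (2*γ*(s:ℝ))^(3*t) ≤ (X.card:ℝ) * (2*γ*(s:ℝ))^(3*t) :=
        mul_le_mul_of_nonneg_right claim1 (by positivity)
      have e4 : (X.card:ℝ) * (2*γ*(s:ℝ))^(3*t) ≤ (X.card:ℝ) * ((d+1-t : ℕ):ℝ)^(3*t) := by
        apply mul_le_mul_of_nonneg_left _ (Nat.cast_nonneg _)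
        exact pow_le_pow_left₀ (by positivity) hq _
      linarith [e1, e2.le, e2.ge, e3, e4, hcountR]
    have h : (t:ℝ) ≤ (Y.card:ℝ) := by
      have hspow : (0:ℝ) < (s:ℝ)^(3*t) := by positivity
      exact le_of_mul_le_mul_right hchain hspow
    exact_mod_cast h
  obtain ⟨B', hB'Y, hB'c⟩ := Finset.exists_subset_card_eq hYt
  exact ⟨S, B', hSA, fun v hv => hXB (hYX (hB'Y hv)), hSc, hB'c,
    fun b hb => hadjY b (hB'Y hb)⟩

theorem stmt6 (c γ : ℝ) (hc0 : 0 < c) (hc1 : c < 1/3) (hγ0 : 0 < γ) (hγ1 : γ < 1/3) :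
    ∃ n₀ : ℕ, ∀ (V : Type) [Fintype V] [DecidableEq V] (G : SimpleGraph V)
      [DecidableRel G.Adj] (A : Fin 3 → Finset V) (B : Finset V),
      n₀ ≤ Fintype.card V →
      (∀ i, (A i).card = ⌊c * Real.logb 2 (Fintype.card V)⌋₊) →
      (∀ i j, i ≠ j → Disjoint (A i) (A j)) →
      (∀ i j, i ≠ j → ∀ u ∈ A i, ∀ v ∈ A j, G.Adj u v) →
      Disjoint B (A 0 ∪ A 1 ∪ A 2) →
      γ * Fintype.card V ≤ B.card →
      (2/3 + 2*γ) * B.card * (A 0 ∪ A 1 ∪ A 2).card ≤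
        (((B ×ˢ (A 0 ∪ A 1 ∪ A 2)).filter fun p => G.Adj p.1 p.2).card : ℝ) →
      ∃ (A' : Fin 3 → Finset V) (B' : Finset V),
        (∀ i, A' i ⊆ A i) ∧ B' ⊆ B ∧
        (∀ i, (A' i).card = ⌊γ * (⌊c * Real.logb 2 (Fintype.card V)⌋₊ : ℝ)⌋₊) ∧
        B'.card = ⌊γ * (⌊c * Real.logb 2 (Fintype.card V)⌋₊ : ℝ)⌋₊ ∧
        (∀ i j, i ≠ j → ∀ u ∈ A' i, ∀ v ∈ A' j, G.Adj u v) ∧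
        (∀ i, ∀ u ∈ A' i, ∀ v ∈ B', G.Adj u v) := by
  classical
  obtain ⟨n₀, hn₀1, hn₀⟩ := asym c γ hc0 hc1 hγ0 hγ1
  refine ⟨n₀, fun V _ _ G _ A B hn hA hdisj hcomp hBK hBcard hE => ?_⟩
  by_cases hs0 : ⌊c * Real.logb 2 (Fintype.card V : ℝ)⌋₊ = 0
  · refine ⟨fun _ => ∅, ∅, fun i => Finset.empty_subset _, Finset.empty_subset _, ?_, ?_, ?_, ?_⟩
    · intro i; rw [Finset.card_empty, hs0]; norm_num
    · rw [Finset.card_empty, hs0]; norm_num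
    · intro i j _ u hu; exact absurd hu (Finset.notMem_empty u)
    · intro i u hu; exact absurd hu (Finset.notMem_empty u)
  have hs1 : 1 ≤ ⌊c * Real.logb 2 (Fintype.card V : ℝ)⌋₊ := Nat.one_le_iff_ne_zero.mpr hs0
  have hn1 : 1 ≤ Fintype.card V := le_trans hn₀1 hn
  have hnR : (1:ℝ) ≤ (Fintype.card V : ℝ) := by exact_mod_cast hn1
  have hsnn : (0:ℝ) ≤ (⌊c * Real.logb 2 (Fintype.card V : ℝ)⌋₊ : ℝ) := Nat.cast_nonneg _
  have htR : ((⌊γ * (⌊c * Real.logb 2 (Fintype.card V : ℝ)⌋₊ : ℝ)⌋₊ : ℕ) : ℝ)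
      ≤ γ * (⌊c * Real.logb 2 (Fintype.card V : ℝ)⌋₊ : ℝ) := Nat.floor_le (by positivity)
  have hts : ⌊γ * (⌊c * Real.logb 2 (Fintype.card V : ℝ)⌋₊ : ℝ)⌋₊
      ≤ ⌊c * Real.logb 2 (Fintype.card V : ℝ)⌋₊ := by
    have h : γ * (⌊c * Real.logb 2 (Fintype.card V : ℝ)⌋₊ : ℝ)
        ≤ ((⌊c * Real.logb 2 (Fintype.card V : ℝ)⌋₊ : ℕ) : ℝ) := by nlinarith
    have h2 := Nat.floor_le_of_le h
    exact h2
  have hfin : ((⌊γ * (⌊c * Real.logb 2 (Fintype.card V : ℝ)⌋₊ : ℝ)⌋₊ : ℕ) : ℝ)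
      ≤ γ^2 * (Fintype.card V : ℝ) *
        (2*γ)^(3*⌊γ * (⌊c * Real.logb 2 (Fintype.card V : ℝ)⌋₊ : ℝ)⌋₊) := by
    apply hn₀ _ hn
    have hlogb : (0:ℝ) ≤ Real.logb 2 (Fintype.card V : ℝ) := Real.logb_nonneg one_lt_two hnR
    have hsle : ((⌊c * Real.logb 2 (Fintype.card V : ℝ)⌋₊ : ℕ) : ℝ)
        ≤ c * Real.logb 2 (Fintype.card V : ℝ) := Nat.floor_le (by positivity)
    nlinarith
  obtain ⟨S, B', hSA, hB'B, hSc, hB'c, hadj⟩ :=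
    core G γ hγ0 hγ1 A B
      (⌊c * Real.logb 2 (Fintype.card V : ℝ)⌋₊)
      (⌊γ * (⌊c * Real.logb 2 (Fintype.card V : ℝ)⌋₊ : ℝ)⌋₊)
      (Fintype.card V) hs1 hA hdisj hBcard hE htR hts hfin
  refine ⟨S, B', hSA, hB'B, hSc, hB'c, ?_, ?_⟩
  · intro i j hij u hu v hv
    exact hcomp i j hij u (hSA i hu) v (hSA j hv)
  · intro i u hu v hv
    exact (hadj v hv i u hu).symm
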